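/- Let α > 0, and let a_k = √(k!/(2Γ(k+1+α))). For any integers r ≥ 1 and K ≥ 0, the iterated tail sum ∑_{k_1 > K} ∑_{k_2 > k_1} ⋯ ∑_{k_r > k_{r-1}} a_{k_r}² converges if α > r, and diverges if α < r. -/

import Mathlib

noncomputable def iterTail (g : ℕ → ℝ) : ℕ → ℕ → ℝ
  | 0 => g
  | r + 1 => fun K => ∑' k : ℕ, if K < k then iterTail g r k else 0

/-- Convergence of the `r`-fold iterated tail sum: every level is summable. -/
def iterSummable (g : ℕ → ℝ) (r : ℕ) : Prop :=
  ∀ j < r, ∀ K : ℕ, Summable (fun k : ℕ => if K < k then iterTail g j k else 0)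

open Real


lemma wendel {s x : ℝ} (hs0 : 0 < s) (hs1 : s ≤ 1) (hx : 0 < x) :
    Real.Gamma (x+1) * (x+s)^s ≤ Real.Gamma (x+1+s) ∧
    Real.Gamma (x+1+s) ≤ Real.Gamma (x+1) * (x+1)^s := by
  have hx1 : (0:ℝ) < x + 1 := by linarith
  have hxs : (0:ℝ) < x + s := by linarith
  have hx1s : (0:ℝ) < x + 1 + s := by linarith
  have hx2 : (0:ℝ) < x + 2 := by linarith
  have hG1 : 0 < Real.Gamma (x+1) := Real.Gamma_pos_of_pos hx1
  have hGs : 0 < Real.Gamma (x+s) := Real.Gamma_pos_of_pos hxs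
  have hG1s : 0 < Real.Gamma (x+1+s) := Real.Gamma_pos_of_pos hx1s
  have hG2 : 0 < Real.Gamma (x+2) := Real.Gamma_pos_of_pos hx2
  have hrec1 : Real.Gamma (x+2) = (x+1) * Real.Gamma (x+1) := by
    have := Real.Gamma_add_one (ne_of_gt hx1)
    rw [show x + 1 + 1 = x + 2 by ring] at this
    linarith [this]
  have hrec2 : Real.Gamma (x+1+s) = (x+s) * Real.Gamma (x+s) := by
    have := Real.Gamma_add_one (ne_of_gt hxs)
    rw [show x + s + 1 = x + 1 + s by ring] at this
    linarith [this]
  have hconv := Real.convexOn_log_Gamma.2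
  constructor
  · -- lower: use point x+1 = s•(x+s) + (1-s)•(x+1+s)
    have h := hconv (Set.mem_Ioi.mpr hxs) (Set.mem_Ioi.mpr hx1s)
      (le_of_lt hs0) (by linarith : (0:ℝ) ≤ 1 - s) (by ring)
    rw [show s • (x+s) + (1-s) • (x+1+s) = x + 1 by simp [smul_eq_mul]; ring] at h
    simp only [Function.comp_apply, smul_eq_mul] at h
    have hlogs : Real.log (Real.Gamma (x+s)) =
        Real.log (Real.Gamma (x+1+s)) - Real.log (x+s) := by
      rw [hrec2, Real.log_mul (ne_of_gt hxs) (ne_of_gt hGs)]; ring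
    rw [hlogs] at h
    have h2 : Real.log (Real.Gamma (x+1)) + s * Real.log (x+s) ≤
        Real.log (Real.Gamma (x+1+s)) := by linarith
    calc Real.Gamma (x+1) * (x+s)^s
        = Real.exp (Real.log (Real.Gamma (x+1)) + s * Real.log (x+s)) := by
          rw [Real.exp_add, Real.exp_log hG1, Real.rpow_def_of_pos hxs]; ring_nf
      _ ≤ Real.exp (Real.log (Real.Gamma (x+1+s))) := Real.exp_le_exp.mpr h2
      _ = Real.Gamma (x+1+s) := Real.exp_log hG1s
  · -- upper: point x+1+s = (1-s)•(x+1) + s•(x+2)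
    have h := hconv (Set.mem_Ioi.mpr hx1) (Set.mem_Ioi.mpr hx2)
      (by linarith : (0:ℝ) ≤ 1 - s) (le_of_lt hs0) (by ring)
    rw [show (1-s) • (x+1) + s • (x+2) = x + 1 + s by simp [smul_eq_mul]; ring] at h
    simp only [Function.comp_apply, smul_eq_mul] at h
    have hlog2 : Real.log (Real.Gamma (x+2)) =
        Real.log (x+1) + Real.log (Real.Gamma (x+1)) := by
      rw [hrec1, Real.log_mul (ne_of_gt hx1) (ne_of_gt hG1)]
    rw [hlog2] at h
    have h2 : Real.log (Real.Gamma (x+1+s)) ≤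
        Real.log (Real.Gamma (x+1)) + s * Real.log (x+1) := by linarith [h]; 
    calc Real.Gamma (x+1+s) = Real.exp (Real.log (Real.Gamma (x+1+s))) := (Real.exp_log hG1s).symm
      _ ≤ Real.exp (Real.log (Real.Gamma (x+1)) + s * Real.log (x+1)) := Real.exp_le_exp.mpr h2
      _ = Real.Gamma (x+1) * (x+1)^s := by
          rw [Real.exp_add, Real.exp_log hG1, Real.rpow_def_of_pos hx1]; ring_nf

lemma gamma_ratio_aux : ∀ n : ℕ, ∀ α : ℝ, 0 < α → α ≤ n →
    ∃ C : ℝ, 0 < C ∧ ∀ x : ℝ, 1 ≤ x →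
      Real.Gamma (x+1) * x^α ≤ Real.Gamma (x+1+α) ∧
      Real.Gamma (x+1+α) ≤ C * (Real.Gamma (x+1) * x^α) := by
  intro n
  induction n with
  | zero => intro α h0 h1; exact absurd (h0.trans_le h1) (by simp)
  | succ n ih =>
    intro α h0 h1
    by_cases hle : α ≤ 1
    · refine ⟨2, by norm_num, fun x hx => ?_⟩
      have hx0 : (0:ℝ) < x := by linarith
      obtain ⟨hlo, hhi⟩ := wendel h0 hle hx0
      constructor
      · refine le_trans ?_ hlo
        have : x ^ α ≤ (x + α) ^ α :=
          Real.rpow_le_rpow (le_of_lt hx0) (by linarith) (le_of_lt h0)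
        nlinarith [Real.Gamma_pos_of_pos (show (0:ℝ) < x + 1 by linarith)]
      · refine hhi.trans ?_
        have h2 : (x+1) ^ α ≤ (2*x) ^ α :=
          Real.rpow_le_rpow (by linarith) (by linarith) (le_of_lt h0)
        have h3 : (2*x) ^ α = 2 ^ α * x ^ α := Real.mul_rpow (by norm_num) (le_of_lt hx0)
        have h4 : (2:ℝ) ^ α ≤ 2 ^ (1:ℝ) :=
          Real.rpow_le_rpow_of_exponent_le (by norm_num) hle
        rw [Real.rpow_one] at h4
        have hG1 : 0 < Real.Gamma (x+1) := Real.Gamma_pos_of_pos (by linarith)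
        have hxa : 0 ≤ x ^ α := Real.rpow_nonneg (le_of_lt hx0) _
        calc Real.Gamma (x+1) * (x+1)^α ≤ Real.Gamma (x+1) * (2^α * x^α) := by
              rw [← h3]; gcongr
          _ ≤ Real.Gamma (x+1) * (2 * x^α) := by gcongr
          _ = 2 * (Real.Gamma (x+1) * x^α) := by ring
    · push_neg at hle
      have h0' : 0 < α - 1 := by linarith
      have h1' : α - 1 ≤ n := by
        have : α ≤ (n:ℝ) + 1 := by exact_mod_cast h1
        linarith
      obtain ⟨C, hC, hIH⟩ := ih (α - 1) h0' h1'
      refine ⟨(1 + α) * C, by positivity, fun x hx => ?_⟩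
      have hx0 : (0:ℝ) < x := by linarith
      have hxa : (0:ℝ) < x + α := by linarith
      obtain ⟨hlo, hhi⟩ := hIH x hx
      have hrec : Real.Gamma (x+1+α) = (x+α) * Real.Gamma (x+1+(α-1)) := by
        have := Real.Gamma_add_one (ne_of_gt hxa)
        rw [show x + α + 1 = x + 1 + α by ring] at this
        rw [this, show x + α = x + 1 + (α - 1) by ring]
      have hpow : x ^ α = x ^ (α - 1) * x := by
        rw [← Real.rpow_add_one (ne_of_gt hx0) (α-1)]; ring_nf
      have hG1 : 0 < Real.Gamma (x+1) := Real.Gamma_pos_of_pos (by linarith)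
      have hpa : 0 < x ^ (α - 1) := Real.rpow_pos_of_pos hx0 _
      constructor
      · rw [hrec, hpow]
        calc Real.Gamma (x+1) * (x ^ (α-1) * x) = x * (Real.Gamma (x+1) * x ^ (α-1)) := by ring
          _ ≤ (x + α) * (Real.Gamma (x+1) * x ^ (α-1)) := by gcongr; linarith
          _ ≤ (x + α) * Real.Gamma (x+1+(α-1)) := by gcongr
      · rw [hrec, hpow]
        have hxle : x + α ≤ (1 + α) * x := by nlinarith
        calc (x+α) * Real.Gamma (x+1+(α-1)) ≤ (x+α) * (C * (Real.Gamma (x+1) * x ^ (α-1))) := by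
              gcongr
          _ ≤ ((1+α)*x) * (C * (Real.Gamma (x+1) * x ^ (α-1))) := by gcongr
          _ = (1+α) * C * (Real.Gamma (x+1) * (x ^ (α-1) * x)) := by ring

lemma gamma_ratio (α : ℝ) (hα : 0 < α) :
    ∃ C : ℝ, 0 < C ∧ ∀ x : ℝ, 1 ≤ x →
      Real.Gamma (x+1) * x^α ≤ Real.Gamma (x+1+α) ∧
      Real.Gamma (x+1+α) ≤ C * (Real.Gamma (x+1) * x^α) :=
  gamma_ratio_aux ⌈α⌉₊ α hα (Nat.le_ceil α)


lemma shift_ite (u : ℕ → ℝ) (K : ℕ) :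
    (Summable (fun k : ℕ => if K < k then u k else 0) ↔ Summable (fun i : ℕ => u (K+1+i))) ∧
    ∑' k : ℕ, (if K < k then u k else 0) = ∑' i : ℕ, u (K+1+i) := by
  have hinj : Function.Injective (fun i : ℕ => K + 1 + i) := add_right_injective (K+1)
  have hzero : ∀ x ∉ Set.range (fun i : ℕ => K + 1 + i),
      (if K < x then u x else 0) = 0 := by
    intro x hx
    rw [if_neg]
    intro hKx
    exact hx ⟨x - (K+1), by show K + 1 + (x - (K+1)) = x; omega⟩
  have hsupp : Function.support (fun k : ℕ => if K < k then u k else 0) ⊆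
      Set.range (fun i : ℕ => K + 1 + i) := by
    intro x hx
    by_cases h : K < x
    · exact ⟨x - (K+1), by show K + 1 + (x - (K+1)) = x; omega⟩
    · exact absurd (by rw [if_neg h] : (if K < x then u x else 0) = 0) hx
  have hcomp : (fun i : ℕ => if K < K + 1 + i then u (K+1+i) else 0) =
      fun i : ℕ => u (K+1+i) := by
    funext i; rw [if_pos (by omega)]
  constructor
  · rw [← hinj.summable_iff hzero]
    exact Eq.to_iff (by rw [show ((fun k : ℕ => if K < k then u k else 0) ∘ fun i => K + 1 + i) = fun i : ℕ => if K < K + 1 + i then u (K+1+i) else 0 from rfl, hcomp])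
  · rw [← hinj.tsum_eq hsupp]
    exact congrArg tsum hcomp

lemma rpow_anti {β : ℝ} (hβ : β < 0) {A B : ℝ} (hA : 1 ≤ A) :
    AntitoneOn (fun x : ℝ => x ^ β) (Set.Icc A B) := by
  intro a ha b hb hab
  exact Real.rpow_le_rpow_of_nonpos (by linarith [ha.1]) hab (le_of_lt hβ)

lemma tail_summable {β : ℝ} (hβ : β < -1) (K : ℕ) :
    Summable (fun k : ℕ => if K < k then (k:ℝ)^β else 0) := by
  rw [(shift_ite (fun k : ℕ => (k:ℝ)^β) K).1]
  have : Summable (fun i : ℕ => ((i:ℝ))^β) := Real.summable_nat_rpow.mpr hβ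
  have h2 := (summable_nat_add_iff (K+1)).mpr this
  refine h2.congr fun i => ?_
  show ((i + (K+1) : ℕ) : ℝ) ^ β = ((K + 1 + i : ℕ) : ℝ) ^ β
  rw [Nat.add_comm i (K+1)]

lemma integral_rpow_tail {β : ℝ} (hβ : β < -1) {A : ℝ} (hA : 1 ≤ A) (n : ℕ) :
    ∫ x in A..(A + n), x ^ β = (A ^ (β+1) - (A+n) ^ (β+1)) / (-(β+1)) := by
  rw [integral_rpow (Or.inr ⟨by linarith, by
    intro h
    rcases Set.mem_uIcc.mp h with ⟨h1, _⟩ | ⟨h1, _⟩ <;> [linarith; nlinarith [Nat.cast_nonneg (α := ℝ) n]]⟩)]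
  rw [div_neg, ← neg_div, neg_sub]

lemma tail_upper {β : ℝ} (hβ : β < -1) {K : ℕ} (hK : 1 ≤ K) :
    ∑' k : ℕ, (if K < k then (k:ℝ)^β else 0) ≤ (K:ℝ)^(β+1) / (-(β+1)) := by
  rw [(shift_ite (fun k : ℕ => (k:ℝ)^β) K).2]
  have hsum : Summable (fun i : ℕ => ((K+1+i : ℕ):ℝ)^β) :=
    (shift_ite (fun k : ℕ => (k:ℝ)^β) K).1.mp (tail_summable hβ K)
  have hK1 : (1:ℝ) ≤ (K:ℝ) := by exact_mod_cast hK
  refine Summable.tsum_le_of_sum_le hsum fun s => ?_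
  set n := s.sup id + 1 with hn
  have hsub : s ⊆ Finset.range n := fun k hk =>
    Finset.mem_range.mpr (Nat.lt_succ_of_le (Finset.le_sup (f := id) hk))
  have h1 : ∑ i ∈ s, ((K+1+i : ℕ):ℝ)^β ≤ ∑ i ∈ Finset.range n, ((K+1+i : ℕ):ℝ)^β :=
    Finset.sum_le_sum_of_subset_of_nonneg hsub fun i _ _ => Real.rpow_nonneg (by positivity) _
  refine h1.trans ?_
  have hanti : AntitoneOn (fun x : ℝ => x ^ β) (Set.Icc (K:ℝ) ((K:ℝ) + n)) :=
    rpow_anti (by linarith) hK1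
  have h2 := hanti.sum_le_integral
  rw [integral_rpow_tail hβ hK1 n] at h2
  have h3 : ∑ i ∈ Finset.range n, ((K+1+i : ℕ):ℝ)^β
      = ∑ i ∈ Finset.range n, (fun x : ℝ => x ^ β) ((K:ℝ) + ((i:ℕ) + 1 : ℕ)) := by
    refine Finset.sum_congr rfl fun i _ => ?_
    push_cast
    ring_nf
  rw [h3]
  refine h2.trans ?_
  have hpos : 0 ≤ ((K:ℝ)+n) ^ (β+1) := Real.rpow_nonneg (by positivity) _
  have hD : 0 < -(β+1) := by linarith
  exact (div_le_div_iff_of_pos_right hD).mpr (by linarith)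

lemma tail_lower {β : ℝ} (hβ : β < -1) {K : ℕ} (hK : 1 ≤ K) :
    (2:ℝ)^(β+1) * (K:ℝ)^(β+1) / (-(β+1)) ≤ ∑' k : ℕ, (if K < k then (k:ℝ)^β else 0) := by
  rw [(shift_ite (fun k : ℕ => (k:ℝ)^β) K).2]
  have hsum : Summable (fun i : ℕ => ((K+1+i : ℕ):ℝ)^β) :=
    (shift_ite (fun k : ℕ => (k:ℝ)^β) K).1.mp (tail_summable hβ K)
  have hK1 : (1:ℝ) ≤ (K:ℝ) := by exact_mod_cast hK
  have hD : 0 < -(β+1) := by linarith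
  have key : ((K:ℝ)+1)^(β+1) / (-(β+1)) ≤ ∑' i : ℕ, ((K+1+i : ℕ):ℝ)^β := by
    have htend := hsum.hasSum.tendsto_sum_nat
    have hlow : ∀ n : ℕ, ((K:ℝ)+1)^(β+1) / (-(β+1)) - ((K:ℝ)+1+n)^(β+1) / (-(β+1))
        ≤ ∑ i ∈ Finset.range n, ((K+1+i : ℕ):ℝ)^β := by
      intro n
      have hanti : AntitoneOn (fun x : ℝ => x ^ β) (Set.Icc ((K:ℝ)+1) ((K:ℝ)+1 + n)) :=
        rpow_anti (by linarith) (by linarith)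
      have h2 := hanti.integral_le_sum
      rw [integral_rpow_tail hβ (by linarith) n] at h2
      have h3 : ∑ i ∈ Finset.range n, (fun x : ℝ => x ^ β) ((K:ℝ) + 1 + (i:ℕ))
          = ∑ i ∈ Finset.range n, ((K+1+i : ℕ):ℝ)^β := by
        refine Finset.sum_congr rfl fun i _ => ?_
        push_cast
        ring_nf
      rw [h3] at h2
      refine le_trans (le_of_eq ?_) h2
      rw [div_sub_div_same]
    have htend2 : Filter.Tendsto
        (fun n : ℕ => ((K:ℝ)+1)^(β+1) / (-(β+1)) - ((K:ℝ)+1+n)^(β+1) / (-(β+1)))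
        Filter.atTop (nhds (((K:ℝ)+1)^(β+1) / (-(β+1)) - 0 / (-(β+1)))) := by
      refine Filter.Tendsto.sub tendsto_const_nhds (Filter.Tendsto.div_const ?_ _)
      have hb : Filter.Tendsto (fun n : ℕ => (K:ℝ)+1+n) Filter.atTop Filter.atTop :=
        Filter.tendsto_atTop_add_const_left _ _ tendsto_natCast_atTop_atTop
      have := (tendsto_rpow_neg_atTop hD).comp hb
      simpa [Function.comp_def] using this
    rw [show ((K:ℝ)+1)^(β+1) / (-(β+1)) - 0 / (-(β+1)) = ((K:ℝ)+1)^(β+1) / (-(β+1)) by ring]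
      at htend2
    exact le_of_tendsto_of_tendsto' htend2 htend hlow
  refine le_trans ?_ key
  refine (div_le_div_iff_of_pos_right hD).mpr ?_
  rw [← Real.mul_rpow (by norm_num) (by positivity)]
  exact Real.rpow_le_rpow_of_nonpos (by positivity) (by linarith) (by linarith)

lemma summable_tail_of_bound {t : ℕ → ℝ} {C β : ℝ} (hβ : β < -1) (hC : 0 ≤ C)
    (h0 : ∀ k, 0 ≤ t k) (hb : ∀ k : ℕ, 1 ≤ k → t k ≤ C * (k:ℝ)^β) (K : ℕ) :
    Summable (fun k : ℕ => if K < k then t k else 0) := by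
  refine Summable.of_nonneg_of_le (fun k => ?_) (fun k => ?_)
    (Summable.mul_left C (tail_summable hβ K))
  · by_cases h : K < k <;> simp [h, h0 k]
  · by_cases h : K < k <;> simp [h]
    exact hb k (by omega)

lemma level_bounds (α : ℝ) (hα : 0 < α) (g : ℕ → ℝ)
    (hg : ∀ k : ℕ, g k = (Nat.factorial k : ℝ) / (2 * Real.Gamma (k + 1 + α))) :
    ∀ j : ℕ, (j:ℝ) < α →
    ∃ c C : ℝ, 0 < c ∧ 0 < C ∧
      (∀ k : ℕ, 0 ≤ iterTail g j k) ∧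
      (∀ k : ℕ, 1 ≤ k →
        c * (k:ℝ)^((j:ℝ)-α) ≤ iterTail g j k ∧ iterTail g j k ≤ C * (k:ℝ)^((j:ℝ)-α)) := by
  intro j
  induction j with
  | zero =>
    intro _
    obtain ⟨C', hC', hb⟩ := gamma_ratio α hα
    refine ⟨1/(2*C'), 1/2, by positivity, by norm_num, fun k => ?_, fun k hk => ?_⟩
    · rw [show iterTail g 0 k = g k from rfl, hg k]
      have h1 : (0:ℝ) < (k:ℝ) + 1 + α := by
        have := Nat.cast_nonneg (α := ℝ) k; linarith
      have := Real.Gamma_pos_of_pos h1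
      positivity
    · set x : ℝ := (k:ℝ) with hx
      have hx1 : (1:ℝ) ≤ x := by rw [hx]; exact_mod_cast hk
      have hx0 : (0:ℝ) < x := by linarith
      obtain ⟨hlo, hhi⟩ := hb x hx1
      have hG1 : 0 < Real.Gamma (x+1) := Real.Gamma_pos_of_pos (by linarith)
      have hGa : 0 < Real.Gamma (x+1+α) := Real.Gamma_pos_of_pos (by linarith)
      have hxa : 0 < x ^ α := Real.rpow_pos_of_pos hx0 _
      have hgk : iterTail g 0 k = Real.Gamma (x+1) / (2 * Real.Gamma (x+1+α)) := by
        rw [show iterTail g 0 k = g k from rfl, hg k, ← Real.Gamma_nat_eq_factorial k]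
      have hxinv : x ^ ((0:ℕ):ℝ) * x ^ α = x ^ α := by norm_num
      have hexp : x ^ (((0:ℕ):ℝ) - α) * x ^ α = 1 := by
        rw [← Real.rpow_add hx0]; norm_num
      have hexp0 : 0 < x ^ (((0:ℕ):ℝ) - α) := Real.rpow_pos_of_pos hx0 _
      constructor
      · rw [hgk, le_div_iff₀ (by positivity)]
        calc 1/(2*C') * x ^ (((0:ℕ):ℝ) - α) * (2 * Real.Gamma (x+1+α))
            ≤ 1/(2*C') * x ^ (((0:ℕ):ℝ) - α) * (2 * (C' * (Real.Gamma (x+1) * x^α))) := by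
              gcongr
          _ = Real.Gamma (x+1) * (x ^ (((0:ℕ):ℝ) - α) * x ^ α) := by
              field_simp
          _ = Real.Gamma (x+1) := by rw [hexp, mul_one]
      · rw [hgk, div_le_iff₀ (by positivity)]
        calc Real.Gamma (x+1) = Real.Gamma (x+1) * (x ^ (((0:ℕ):ℝ) - α) * x ^ α) := by
              rw [hexp, mul_one]
          _ = 1/2 * x ^ (((0:ℕ):ℝ) - α) * (2 * (Real.Gamma (x+1) * x ^ α)) := by ring
          _ ≤ 1/2 * x ^ (((0:ℕ):ℝ) - α) * (2 * Real.Gamma (x+1+α)) := by gcongr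
  | succ j ih =>
    intro hj1
    have hj1' : (j:ℝ) + 1 < α := by push_cast at hj1; linarith
    obtain ⟨c, C, hc, hC, h0, hb⟩ := ih (by linarith)
    set β : ℝ := (j:ℝ) - α with hβdef
    have hβ : β < -1 := by simp [hβdef]; linarith
    have hD : 0 < -(β+1) := by simp [hβdef]; linarith
    have hdef : ∀ K : ℕ, iterTail g (j+1) K
        = ∑' k : ℕ, if K < k then iterTail g j k else 0 := fun K => rfl
    have hS : ∀ K : ℕ, Summable (fun k : ℕ => if K < k then iterTail g j k else 0) :=
      summable_tail_of_bound hβ hC.le h0 (fun k hk => (hb k hk).2)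
    have h2p : (0:ℝ) < (2:ℝ) ^ (β+1) := Real.rpow_pos_of_pos (by norm_num) _
    refine ⟨c * (2:ℝ)^(β+1) / (-(β+1)), C / (-(β+1)), by positivity, by positivity,
      fun K => ?_, fun K hK => ?_⟩
    · rw [hdef]
      refine tsum_nonneg fun k => ?_
      by_cases h : K < k <;> simp [h, h0 k]
    · have hexp : ((j+1:ℕ):ℝ) - α = β + 1 := by push_cast; simp [hβdef]; ring
      have hKpos : 0 < (K:ℝ) ^ (β+1) := Real.rpow_pos_of_pos (by exact_mod_cast hK) _
      constructor
      · rw [hdef, hexp]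
        have step1 : ∑' k : ℕ, (fun k : ℕ => c * if K < k then (k:ℝ)^β else 0) k
            ≤ ∑' k : ℕ, (if K < k then iterTail g j k else 0) := by
          refine Summable.tsum_le_tsum (fun k => ?_) ((tail_summable hβ K).mul_left c) (hS K)
          by_cases h : K < k <;> simp [h]
          exact (hb k (by omega)).1
        refine le_trans ?_ step1
        rw [tsum_mul_left]
        calc c * (2:ℝ)^(β+1) / (-(β+1)) * (K:ℝ)^(β+1)
            = c * ((2:ℝ)^(β+1) * (K:ℝ)^(β+1) / (-(β+1))) := by ring
          _ ≤ c * ∑' k : ℕ, (if K < k then (k:ℝ)^β else 0) := by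
              gcongr
              exact tail_lower hβ hK
      · rw [hdef, hexp]
        have step1 : ∑' k : ℕ, (if K < k then iterTail g j k else 0)
            ≤ ∑' k : ℕ, (fun k : ℕ => C * if K < k then (k:ℝ)^β else 0) k := by
          refine Summable.tsum_le_tsum (fun k => ?_) (hS K) ((tail_summable hβ K).mul_left C)
          by_cases h : K < k <;> simp [h]
          exact (hb k (by omega)).2
        refine step1.trans ?_
        rw [tsum_mul_left]
        calc C * ∑' k : ℕ, (if K < k then (k:ℝ)^β else 0)
            ≤ C * ((K:ℝ)^(β+1) / (-(β+1))) := by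
              gcongr
              exact tail_upper hβ hK
          _ = C / (-(β+1)) * (K:ℝ)^(β+1) := by ring

theorem stmt17 (α : ℝ) (hα : 0 < α) (r : ℕ) (hr : 1 ≤ r)
    (g : ℕ → ℝ)
    (hg : ∀ k : ℕ, g k = (Nat.factorial k : ℝ) / (2 * Real.Gamma (k + 1 + α))) :
    ((r : ℝ) < α → iterSummable g r) ∧ (α < r → ¬ iterSummable g r) := by
  constructor
  · intro hrα j hj K
    have hjα : (j:ℝ) + 1 < α := by
      have : (j:ℝ) + 1 ≤ (r:ℝ) := by exact_mod_cast Nat.succ_le_of_lt hj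
      linarith
    obtain ⟨c, C, hc, hC, h0, hb⟩ := level_bounds α hα g hg j (by linarith)
    exact summable_tail_of_bound (by linarith : (j:ℝ) - α < -1) hC.le h0
      (fun k hk => (hb k hk).2) K
  · intro hαr hsum
    set j : ℕ := ⌈α⌉₊ - 1 with hj
    have hceil1 : 1 ≤ ⌈α⌉₊ := Nat.one_le_iff_ne_zero.mpr (by
      intro h; have := Nat.ceil_eq_zero.mp h; linarith)
    have hjsucc : (j:ℝ) + 1 = (⌈α⌉₊ : ℝ) := by
      rw [hj, Nat.cast_sub hceil1]; push_cast; ring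
    have hjα : (j:ℝ) < α := by
      have h1 : (⌈α⌉₊ : ℝ) < α + 1 := Nat.ceil_lt_add_one hα.le
      linarith
    have hαj : α ≤ (j:ℝ) + 1 := by rw [hjsucc]; exact Nat.le_ceil α
    have hjr : j < r := by
      have h2 : ⌈α⌉₊ ≤ r := Nat.ceil_le.mpr (by exact_mod_cast hαr.le)
      omega
    obtain ⟨c, C, hc, hC, h0, hb⟩ := level_bounds α hα g hg j hjα
    have hsummable := hsum j hjr 1
    set β : ℝ := (j:ℝ) - α with hβdef
    have hβge : -1 ≤ β := by simp [hβdef]; linarith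
    -- compare to get Summable of rpow
    have hcs : Summable (fun k : ℕ => if 1 < k then c * (k:ℝ)^β else 0) := by
      refine Summable.of_nonneg_of_le (fun k => ?_) (fun k => ?_) hsummable
      · by_cases h : 1 < k <;> simp [h]
        positivity
      · by_cases h : 1 < k <;> simp [h]
        exact (hb k (by omega)).1
    have hcs2 : Summable (fun n : ℕ => c * ((n+2:ℕ):ℝ)^β) := by
      have := (summable_nat_add_iff 2).mpr hcs
      refine this.congr fun n => ?_
      rw [if_pos (by omega)]
    have hcs3 : Summable (fun n : ℕ => ((n+2:ℕ):ℝ)^β) := by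
      have := hcs2.mul_left c⁻¹
      refine this.congr fun n => ?_
      field_simp
    have hcs4 : Summable (fun n : ℕ => (n:ℝ)^β) :=
      (summable_nat_add_iff 2).mp (hcs3.congr fun n => by norm_cast)
    have := Real.summable_nat_rpow.mp hcs4
    linarith
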